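/- Let n ∈ {5, 6}. There is no n×n additive-multiplicative magic square of distinct positive integers with magic product P that contains an entry E such that P/E is a prime power, i.e., P/E = p^k for some prime p and some integer k ≥ 1. -/

import Mathlib

open Finset

/-- Geometric sum bound: `∑_{a < n} p^a < p^n` for `p ≥ 2`. -/
lemma geom_sum_lt_pow (p : ℕ) (hp : 2 ≤ p) (n : ℕ) :
    ∑ a ∈ range n, p ^ a < p ^ n := by
  induction n with
  | zero => simp
  | succ n ih =>
    rw [Finset.sum_range_succ, pow_succ]
    have h2 : p ^ n * 2 ≤ p ^ n * p := Nat.mul_le_mul_left _ hp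
    omega

/-- Sum of a finset of exponents is bounded by `p^(max+1)`. -/
lemma sum_pow_lt (p : ℕ) (hp : 2 ≤ p) (s : Finset ℕ) (hs : s.Nonempty) :
    ∑ a ∈ s, p ^ a < p ^ (s.max' hs + 1) := by
  calc ∑ a ∈ s, p ^ a ≤ ∑ a ∈ range (s.max' hs + 1), p ^ a := by
        apply Finset.sum_le_sum_of_subset
        intro a ha
        exact Finset.mem_range.2 (Nat.lt_succ_of_le (Finset.le_max' s a ha))
    _ < p ^ (s.max' hs + 1) := geom_sum_lt_pow p hp _

/-- Uniqueness of representation as a sum of distinct powers of `p`. -/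
lemma pow_sum_inj (p : ℕ) (hp : 2 ≤ p) :
    ∀ s t : Finset ℕ, (∑ a ∈ s, p ^ a) = (∑ a ∈ t, p ^ a) → s = t := by
  intro s
  induction s using Finset.strongInduction with
  | _ s ih =>
    intro t h
    have hpos : ∀ a : ℕ, 0 < p ^ a := fun a => Nat.pow_pos (by omega)
    rcases Finset.eq_empty_or_nonempty s with hs | hs
    · subst hs
      simp only [Finset.sum_empty] at h
      rcases Finset.eq_empty_or_nonempty t with ht | ht
      · exact ht.symm
      · exact absurd h.symm (Nat.ne_of_gt (Finset.sum_pos (fun a _ => hpos a) ht))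
    · have ht : t.Nonempty := by
        rcases Finset.eq_empty_or_nonempty t with ht | ht
        · subst ht; simp only [Finset.sum_empty] at h
          exact absurd h (Nat.ne_of_gt (Finset.sum_pos (fun a _ => hpos a) hs))
        · exact ht
      set m := s.max' hs with hm
      set m' := t.max' ht with hm'
      have h1 : p ^ m ≤ ∑ a ∈ s, p ^ a :=
        Finset.single_le_sum (fun a _ => Nat.zero_le _) (s.max'_mem hs)
      have h1' : p ^ m' ≤ ∑ a ∈ t, p ^ a :=
        Finset.single_le_sum (fun a _ => Nat.zero_le _) (t.max'_mem ht)
      have h2 : ∑ a ∈ s, p ^ a < p ^ (m + 1) := sum_pow_lt p hp s hs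
      have h2' : ∑ a ∈ t, p ^ a < p ^ (m' + 1) := sum_pow_lt p hp t ht
      have hmm : m = m' := by
        have ha : p ^ m < p ^ (m' + 1) := lt_of_le_of_lt (h.symm ▸ h1) h2'
        have hb : p ^ m' < p ^ (m + 1) := lt_of_le_of_lt (h ▸ h1') h2
        have h1p : 1 < p := by omega
        have := (Nat.pow_lt_pow_iff_right h1p).1 ha
        have := (Nat.pow_lt_pow_iff_right h1p).1 hb
        omega
      have hes : p ^ m + ∑ a ∈ s.erase m, p ^ a = ∑ a ∈ s, p ^ a :=
        Finset.add_sum_erase s _ (s.max'_mem hs)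
      have het : p ^ m' + ∑ a ∈ t.erase m', p ^ a = ∑ a ∈ t, p ^ a :=
        Finset.add_sum_erase t _ (t.max'_mem ht)
      have heq : ∑ a ∈ s.erase m, p ^ a = ∑ a ∈ t.erase m, p ^ a := by
        rw [← hmm] at het; omega
      have := ih (s.erase m) (Finset.erase_ssubset (s.max'_mem hs)) (t.erase m) heq
      have hins : s = insert m (s.erase m) := (Finset.insert_erase (s.max'_mem hs)).symm
      rw [hins, this, Finset.insert_erase (hmm ▸ t.max'_mem ht)]

/-- `A` is an `n × n` additive-multiplicative magic square of pairwise distinct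
positive integers, with magic sum `S` and magic product `P`: every row, every
column, and both long diagonals have sum `S` and product `P`. -/
def IsAddMulMagicSquare (n : ℕ) (A : Fin n → Fin n → ℕ) (S P : ℕ) : Prop :=
  (∀ i j, 0 < A i j) ∧
  (Function.Injective fun c : Fin n × Fin n => A c.1 c.2) ∧
  (∀ i, ∑ j, A i j = S) ∧
  (∀ j, ∑ i, A i j = S) ∧
  (∑ i, A i i = S) ∧
  (∑ i, A i i.rev = S) ∧
  (∀ i, ∏ j, A i j = P) ∧
  (∀ j, ∏ i, A i j = P) ∧
  (∏ i, A i i = P) ∧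
  (∏ i, A i i.rev = P)

/-- No 5×5 or 6×6 additive-multiplicative magic square of distinct positive
integers has an entry `E` with `P / E` a prime power. -/
theorem no_magic_square_with_prime_power_complement
    (n : ℕ) (hn : n = 5 ∨ n = 6) :
    ¬ ∃ (A : Fin n → Fin n → ℕ) (S P : ℕ) (i j : Fin n) (p k : ℕ),
      IsAddMulMagicSquare n A S P ∧ p.Prime ∧ 1 ≤ k ∧ P = A i j * p ^ k := by
  rintro ⟨A, S, P, i0, j0, p, k, ⟨hpos, hinj, hrow, hcol, -, -, hprow, hpcol, -, -⟩, hp, hk, hP⟩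
  have hp2 : 2 ≤ p := hp.two_le
  have h1p : 1 < p := hp2
  -- product of the rest of row i0 is p^k
  have hr : ∏ j ∈ univ.erase j0, A i0 j = p ^ k := by
    have h1 : A i0 j0 * ∏ j ∈ univ.erase j0, A i0 j = A i0 j0 * p ^ k := by
      rw [Finset.mul_prod_erase univ _ (mem_univ j0), hprow i0, hP]
    exact Nat.eq_of_mul_eq_mul_left (hpos i0 j0) h1
  have hc : ∏ i ∈ univ.erase i0, A i j0 = p ^ k := by
    have h1 : A i0 j0 * ∏ i ∈ univ.erase i0, A i j0 = A i0 j0 * p ^ k := by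
      rw [Finset.mul_prod_erase univ (fun i => A i j0) (mem_univ i0), hpcol j0, hP]
    exact Nat.eq_of_mul_eq_mul_left (hpos i0 j0) h1
  -- all those entries are powers of p
  have hrpow : ∀ j ∈ univ.erase j0, ∃ a, A i0 j = p ^ a := by
    intro j hj
    have hdvd : A i0 j ∣ p ^ k := hr ▸ Finset.dvd_prod_of_mem _ hj
    obtain ⟨a, -, ha⟩ := (Nat.dvd_prime_pow hp).1 hdvd
    exact ⟨a, ha⟩
  have hcpow : ∀ i ∈ univ.erase i0, ∃ a, A i j0 = p ^ a := by
    intro i hi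
    have hdvd : A i j0 ∣ p ^ k := hc ▸ Finset.dvd_prod_of_mem _ hi
    obtain ⟨a, -, ha⟩ := (Nat.dvd_prime_pow hp).1 hdvd
    exact ⟨a, ha⟩
  -- the sums of the rests are equal
  have hsum : ∑ j ∈ univ.erase j0, A i0 j = ∑ i ∈ univ.erase i0, A i j0 := by
    have h1 := hrow i0
    have h2 := hcol j0
    rw [← Finset.add_sum_erase univ _ (mem_univ j0)] at h1
    rw [← Finset.add_sum_erase univ (fun i => A i j0) (mem_univ i0)] at h2
    omega
  -- exponent sets
  set s1 : Finset ℕ := (univ.erase j0).image (fun j => Nat.log p (A i0 j)) with hs1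
  set s2 : Finset ℕ := (univ.erase i0).image (fun i => Nat.log p (A i j0)) with hs2
  have hrec1 : ∀ j ∈ univ.erase j0, p ^ Nat.log p (A i0 j) = A i0 j := by
    intro j hj
    obtain ⟨a, ha⟩ := hrpow j hj
    rw [ha, Nat.log_pow h1p]
  have hrec2 : ∀ i ∈ univ.erase i0, p ^ Nat.log p (A i j0) = A i j0 := by
    intro i hi
    obtain ⟨a, ha⟩ := hcpow i hi
    rw [ha, Nat.log_pow h1p]
  have hinj1 : ∀ j ∈ univ.erase j0, ∀ j' ∈ univ.erase j0,
      Nat.log p (A i0 j) = Nat.log p (A i0 j') → j = j' := by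
    intro j hj j' hj' hlog
    have : A i0 j = A i0 j' := by
      rw [← hrec1 j hj, ← hrec1 j' hj', hlog]
    have := hinj (a₁ := (i0, j)) (a₂ := (i0, j')) this
    exact (Prod.mk.injEq _ _ _ _ ▸ this).2
  have hinj2 : ∀ i ∈ univ.erase i0, ∀ i' ∈ univ.erase i0,
      Nat.log p (A i j0) = Nat.log p (A i' j0) → i = i' := by
    intro i hi i' hi' hlog
    have : A i j0 = A i' j0 := by
      rw [← hrec2 i hi, ← hrec2 i' hi', hlog]
    have := hinj (a₁ := (i, j0)) (a₂ := (i', j0)) this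
    exact (Prod.mk.injEq _ _ _ _ ▸ this).1
  have hsum1 : ∑ a ∈ s1, p ^ a = ∑ j ∈ univ.erase j0, A i0 j := by
    rw [hs1, Finset.sum_image hinj1]
    exact Finset.sum_congr rfl hrec1
  have hsum2 : ∑ a ∈ s2, p ^ a = ∑ i ∈ univ.erase i0, A i j0 := by
    rw [hs2, Finset.sum_image hinj2]
    exact Finset.sum_congr rfl hrec2
  have hseq : s1 = s2 := pow_sum_inj p hp2 s1 s2 (by rw [hsum1, hsum2, hsum])
  -- n ≥ 2, so there is some j1 ≠ j0
  have hn2 : 2 ≤ n := by rcases hn with h | h <;> omega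
  have hne : (univ.erase j0 : Finset (Fin n)).Nonempty := by
    rw [← Finset.card_pos, Finset.card_erase_of_mem (mem_univ j0), Finset.card_univ,
      Fintype.card_fin]
    omega
  obtain ⟨j1, hj1⟩ := hne
  have hmem : Nat.log p (A i0 j1) ∈ s2 := by
    rw [← hseq, hs1]
    exact Finset.mem_image_of_mem _ hj1
  rw [hs2, Finset.mem_image] at hmem
  obtain ⟨i1, hi1, hlog⟩ := hmem
  have hvals : A i1 j0 = A i0 j1 := by
    rw [← hrec2 i1 hi1, ← hrec1 j1 hj1, hlog]
  have := hinj (a₁ := (i1, j0)) (a₂ := (i0, j1)) hvals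
  have h1 : i1 = i0 := (Prod.mk.injEq _ _ _ _ ▸ this).1
  exact (Finset.mem_erase.1 hi1).1 h1
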